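/- Let v_1,...,v_n be vectors in ℂ^d, and for A ⊆ {1,...,n} let Π(A) denote the orthogonal projection onto span{v_i : i ∈ A}, with Π(∅) = 0. Define the Möbius operators 𝔇(A) = ∑_{B ⊆ A} (−1)^{|A|−|B|} Π(B). Let p : {1,...,n} → [0,∞) and let σ be a ranking permutation of p. Then ∑_{i=1}^{n} p(σ(i))·(Π({σ(i), σ(i+1),...,σ(n)}) − Π({σ(i+1),...,σ(n)})) = ∑_{∅ ≠ A ⊆ {1,...,n}} (min_{i ∈ A} p(i)) · 𝔇(A); that is, the Choquet integral equals the sum over all nonempty subsets A of the Möbius operator 𝔇(A) weighted by the minimum of p over A. -/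

import Mathlib

/-- The matrix (w.r.t. the standard basis) of the orthogonal projection of `ℂ^d`
onto the span of a set `S` of vectors. -/
noncomputable def projMat {d : ℕ} (S : Set (EuclideanSpace ℂ (Fin d))) :
    Matrix (Fin d) (Fin d) ℂ :=
  LinearMap.toMatrix (EuclideanSpace.basisFun (Fin d) ℂ).toBasis
    (EuclideanSpace.basisFun (Fin d) ℂ).toBasis
    ((Submodule.span ℂ S).subtype ∘ₗ
      (Submodule.orthogonalProjection (Submodule.span ℂ S)).toLinearMap)

/-- `Π(A)`: the orthogonal projection onto `span {v i : i ∈ A}` (equal to `0` for `A = ∅`). -/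
noncomputable def projMatSet {d n : ℕ} (v : Fin n → EuclideanSpace ℂ (Fin d))
    (A : Finset (Fin n)) : Matrix (Fin d) (Fin d) ℂ :=
  projMat (v '' ↑A)

/-- The Möbius operators `𝔇(A) = ∑_{B ⊆ A} (−1)^{|A|−|B|} Π(B)`. -/
noncomputable def mobiusOp {d n : ℕ} (v : Fin n → EuclideanSpace ℂ (Fin d))
    (A : Finset (Fin n)) : Matrix (Fin d) (Fin d) ℂ :=
  ∑ B ∈ A.powerset, ((-1 : ℝ) ^ (A.card - B.card)) • projMatSet v B

/-- The set `{σ(i), σ(i+1), ..., σ(n)}`. -/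
def tailSet {n : ℕ} (σ : Equiv.Perm (Fin n)) (i : Fin n) : Finset (Fin n) :=
  (Finset.univ.filter fun j : Fin n => i ≤ j).image σ

/-- The set `{σ(i+1), ..., σ(n)}` (empty when `i = n`). -/
def strictTailSet {n : ℕ} (σ : Equiv.Perm (Fin n)) (i : Fin n) : Finset (Fin n) :=
  (Finset.univ.filter fun j : Fin n => i < j).image σ

/- ## Auxiliary lemmas -/

lemma neg_one_sum_powerset_real {α : Type*} [DecidableEq α] (x : Finset α) :
    (∑ m ∈ x.powerset, (-1 : ℝ) ^ m.card) = if x = ∅ then 1 else 0 := by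
  have h := Finset.sum_powerset_neg_one_pow_card (x := x)
  have h2 := congrArg (fun z : ℤ => (z : ℝ)) h
  push_cast at h2
  simpa using h2

lemma aux_coeff {α : Type*} [DecidableEq α] {B C : Finset α} (hBC : B ⊆ C) :
    (∑ A ∈ C.powerset.filter (fun A => B ⊆ A), (-1 : ℝ) ^ (A.card - B.card))
      = if B = C then 1 else 0 := by
  have h1 : (∑ A ∈ C.powerset.filter (fun A => B ⊆ A), (-1 : ℝ) ^ (A.card - B.card))
      = ∑ m ∈ (C \ B).powerset, (-1 : ℝ) ^ m.card := by
    refine Finset.sum_nbij' (fun A => A \ B) (fun m => m ∪ B) ?_ ?_ ?_ ?_ ?_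
    · intro A hA
      rw [Finset.mem_filter, Finset.mem_powerset] at hA
      exact Finset.mem_powerset.mpr (Finset.sdiff_subset_sdiff hA.1 Finset.Subset.rfl)
    · intro m hm
      rw [Finset.mem_powerset] at hm
      rw [Finset.mem_filter, Finset.mem_powerset]
      exact ⟨Finset.union_subset (hm.trans (Finset.sdiff_subset)) hBC,
        Finset.subset_union_right⟩
    · intro A hA
      rw [Finset.mem_filter] at hA
      exact Finset.sdiff_union_of_subset hA.2
    · intro m hm
      rw [Finset.mem_powerset] at hm
      have hd : Disjoint m B := Finset.disjoint_of_subset_left hm Finset.sdiff_disjoint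
      show (m ∪ B) \ B = m
      rw [Finset.union_sdiff_distrib, Finset.sdiff_self, Finset.union_empty,
        Finset.sdiff_eq_self_of_disjoint hd]
    · intro A hA
      rw [Finset.mem_filter] at hA
      rw [Finset.card_sdiff_of_subset hA.2]
  rw [h1, neg_one_sum_powerset_real]
  congr 1
  rw [eq_iff_iff, Finset.sdiff_eq_empty_iff_subset]
  exact ⟨fun h => le_antisymm hBC h, fun h => h ▸ Finset.Subset.rfl⟩

lemma mobius_inv {d n : ℕ} (v : Fin n → EuclideanSpace ℂ (Fin d)) (C : Finset (Fin n)) :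
    ∑ A ∈ C.powerset, mobiusOp v A = projMatSet v C := by
  classical
  unfold mobiusOp
  rw [Finset.sum_comm' (t' := C.powerset)
    (s' := fun B => C.powerset.filter (fun A => B ⊆ A))
    (fun A B => by
      rw [Finset.mem_filter, Finset.mem_powerset, Finset.mem_powerset, Finset.mem_powerset]
      constructor
      · rintro ⟨h1, h2⟩; exact ⟨⟨h1, h2⟩, h2.trans h1⟩
      · rintro ⟨⟨h1, h2⟩, _⟩; exact ⟨h1, h2⟩)]
  have key : ∀ B ∈ C.powerset,
      (∑ A ∈ C.powerset.filter (fun A => B ⊆ A),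
        ((-1 : ℝ) ^ (A.card - B.card)) • projMatSet v B)
      = if B = C then projMatSet v B else 0 := by
    intro B hB
    rw [← Finset.sum_smul, aux_coeff (Finset.mem_powerset.mp hB)]
    split <;> simp
  rw [Finset.sum_congr rfl key, Finset.sum_ite_eq' C.powerset C (fun B => projMatSet v B)]
  simp [Finset.mem_powerset]

lemma proj_diff {d n : ℕ} (v : Fin n → EuclideanSpace ℂ (Fin d)) {a : Fin n}
    {s : Finset (Fin n)} (ha : a ∉ s) :
    projMatSet v (insert a s) - projMatSet v s
      = ∑ B ∈ s.powerset, mobiusOp v (insert a B) := by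
  classical
  have h := Finset.sum_powerset_insert ha (mobiusOp v)
  rw [mobius_inv, mobius_inv] at h
  rw [h, add_sub_cancel_left]

lemma tail_insert {n : ℕ} (σ : Equiv.Perm (Fin n)) (i : Fin n) :
    tailSet σ i = insert (σ i) (strictTailSet σ i) := by
  ext a
  simp only [tailSet, strictTailSet, Finset.mem_insert, Finset.mem_image, Finset.mem_filter,
    Finset.mem_univ, true_and]
  constructor
  · rintro ⟨j, hij, rfl⟩
    rcases eq_or_lt_of_le hij with h | h
    · exact Or.inl (by rw [← h])
    · exact Or.inr ⟨j, h, rfl⟩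
  · rintro (rfl | ⟨j, hij, rfl⟩)
    · exact ⟨i, le_refl i, rfl⟩
    · exact ⟨j, le_of_lt hij, rfl⟩

lemma not_mem_strict {n : ℕ} (σ : Equiv.Perm (Fin n)) (i : Fin n) :
    σ i ∉ strictTailSet σ i := by
  simp only [strictTailSet, Finset.mem_image, Finset.mem_filter, Finset.mem_univ, true_and]
  rintro ⟨j, hij, hj⟩
  exact absurd (σ.injective hj) (ne_of_gt hij)

/-- The minimal rank of an element of a nonempty finset `A`. -/
def minIdx {n : ℕ} (σ : Equiv.Perm (Fin n)) (A : Finset (Fin n)) (hA : A.Nonempty) : Fin n :=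
  (A.image ⇑σ.symm).min' (hA.image _)

lemma minIdx_mem {n : ℕ} (σ : Equiv.Perm (Fin n)) (A : Finset (Fin n)) (hA : A.Nonempty) :
    σ (minIdx σ A hA) ∈ A := by
  have h := (A.image ⇑σ.symm).min'_mem (hA.image _)
  rw [Finset.mem_image] at h
  obtain ⟨a, ha, h⟩ := h
  rw [minIdx, ← h]
  simpa using ha

lemma minIdx_le {n : ℕ} (σ : Equiv.Perm (Fin n)) (A : Finset (Fin n)) (hA : A.Nonempty)
    {a : Fin n} (ha : a ∈ A) : minIdx σ A hA ≤ σ.symm a :=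
  Finset.min'_le _ _ (Finset.mem_image_of_mem _ ha)

/-- the Choquet integral built from the cumulative projectors of a
ranking permutation `σ` of `p` equals the sum over all nonempty subsets `A` of the
Möbius operator `𝔇(A)` weighted by `min_{i ∈ A} p i` (written as `sInf (p '' A)`). -/
theorem choquet_matrix_eq_mobius_sum {d n : ℕ}
    (v : Fin n → EuclideanSpace ℂ (Fin d))
    (p : Fin n → ℝ) (hp : ∀ i, 0 ≤ p i)
    (σ : Equiv.Perm (Fin n)) (hσ : Monotone fun i => p (σ i)) :
    ∑ i : Fin n, p (σ i) •
        (projMatSet v (tailSet σ i) - projMatSet v (strictTailSet σ i)) =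
      ∑ A ∈ Finset.univ.powerset.filter (fun A : Finset (Fin n) => A.Nonempty),
        sInf (p '' ↑A) • mobiusOp v A := by
  classical
  have step : ∀ i : Fin n,
      p (σ i) • (projMatSet v (tailSet σ i) - projMatSet v (strictTailSet σ i))
        = ∑ B ∈ (strictTailSet σ i).powerset, p (σ i) • mobiusOp v (insert (σ i) B) := by
    intro i
    rw [tail_insert, proj_diff v (not_mem_strict σ i), Finset.smul_sum]
  rw [Finset.sum_congr rfl (fun i _ => step i),
    Finset.sum_sigma' Finset.univ (fun i => (strictTailSet σ i).powerset)
      (fun i B => p (σ i) • mobiusOp v (insert (σ i) B))]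
  -- facts about membership in the sigma set
  have hstrict : ∀ (k : Fin n) {B : Finset (Fin n)}, B ⊆ strictTailSet σ k →
      ∀ a ∈ B, k < σ.symm a := by
    intro k B hB a ha
    have := hB ha
    simp only [strictTailSet, Finset.mem_image, Finset.mem_filter, Finset.mem_univ,
      true_and] at this
    obtain ⟨j, hj, rfl⟩ := this
    simpa using hj
  refine Finset.sum_bij' (i := fun x _ => insert (σ x.1) x.2)
    (j := fun A hA => ⟨minIdx σ A (Finset.mem_filter.mp hA).2,
      A.erase (σ (minIdx σ A (Finset.mem_filter.mp hA).2))⟩) ?_ ?_ ?_ ?_ ?_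
  · intro x _
    exact Finset.mem_filter.mpr ⟨Finset.mem_powerset.mpr (Finset.subset_univ _),
      Finset.insert_nonempty _ _⟩
  · intro A hA
    rw [Finset.mem_sigma]
    refine ⟨Finset.mem_univ _, Finset.mem_powerset.mpr ?_⟩
    intro b hb
    rw [Finset.mem_erase] at hb
    have h1 : minIdx σ A (Finset.mem_filter.mp hA).2 ≤ σ.symm b :=
      minIdx_le σ A (Finset.mem_filter.mp hA).2 hb.2
    have h2 : minIdx σ A (Finset.mem_filter.mp hA).2 ≠ σ.symm b := fun h =>
      hb.1 (by rw [h, Equiv.apply_symm_apply])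
    simp only [strictTailSet, Finset.mem_image, Finset.mem_filter, Finset.mem_univ, true_and]
    exact ⟨σ.symm b, lt_of_le_of_ne h1 h2, by simp⟩
  · rintro ⟨k, B⟩ hx
    rw [Finset.mem_sigma, Finset.mem_powerset] at hx
    have hB : B ⊆ strictTailSet σ k := hx.2
    have hnot : σ k ∉ B := fun h => not_mem_strict σ k (hB h)
    have hm : minIdx σ (insert (σ k) B)
        (Finset.mem_filter.mp (Finset.mem_filter.mpr ⟨Finset.mem_powerset.mpr
          (Finset.subset_univ _), Finset.insert_nonempty _ _⟩)).2 = k := by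
      apply le_antisymm
      · have := minIdx_le σ (insert (σ k) B) (Finset.insert_nonempty _ _)
          (Finset.mem_insert_self (σ k) B)
        simpa using this
      · apply Finset.le_min'
        intro y hy
        rw [Finset.mem_image] at hy
        obtain ⟨a, ha, rfl⟩ := hy
        rcases Finset.mem_insert.mp ha with rfl | ha
        · simp
        · exact le_of_lt (by simpa using hstrict k hB a ha)
    simp only [hm]
    congr 1
    exact Finset.erase_insert hnot
  · intro A hA
    exact Finset.insert_erase (minIdx_mem σ A (Finset.mem_filter.mp hA).2)
  · rintro ⟨k, B⟩ hx
    rw [Finset.mem_sigma, Finset.mem_powerset] at hx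
    have hB : B ⊆ strictTailSet σ k := hx.2
    have hinf : sInf (p '' ↑(insert (σ k) B)) = p (σ k) := by
      apply IsLeast.csInf_eq
      constructor
      · exact ⟨σ k, by simp, rfl⟩
      · rintro x ⟨a, ha, rfl⟩
        simp only [Finset.coe_insert, Set.mem_insert_iff, Finset.mem_coe] at ha
        rcases ha with rfl | ha
        · exact le_refl _
        · have hk : k < σ.symm a := hstrict k hB a ha
          have := hσ (le_of_lt hk)
          simpa using this
    rw [hinf]
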